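/- Let M be the hypergraphic matroid of a hypergraph H = (V,E) with rank function r, let H₁ = (V₁, C₁) be a connected subhypergraph of H with r(C₁) < |V₁| - 1, and let J = {J₁,…,J_l} be a feasible partition of V₁ achieving r(C₁) = |V₁| - |J| + |δ_{H₁}(J)|. Then r(C₁) - r(C₁ ∖ δ_{H₁}(J)) ≥ |J| - |V₁| + r(C₁) = |δ_{H₁}(J)|, and |J| ≥ 2 with δ_{H₁}(J) nonempty. -/

import Mathlib

open Finset
open scoped Classical

noncomputable section

variable {V E : Type*}

/-- The set of hyperedges meeting at least two parts of the partition `P` (the cut `δ(P)`). -/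
def hcut [Fintype V] [DecidableEq V] [Fintype E] (edge : E → Finset V)
    (P : Finpartition (univ : Finset V)) : Finset E :=
  univ.filter fun e => ∃ p ∈ P.parts, ∃ q ∈ P.parts,
    p ≠ q ∧ (edge e ∩ p).Nonempty ∧ (edge e ∩ q).Nonempty

/-- The hyperedges entirely contained in the vertex set `X`. -/
def edgesIn [DecidableEq V] [Fintype E] (edge : E → Finset V) (X : Finset V) : Finset E :=
  univ.filter fun e => edge e ⊆ X

/-- The strength `S(H)`. -/
def strength [Fintype V] [DecidableEq V] [Fintype E] (edge : E → Finset V) : ℝ :=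
  sInf { r : ℝ | ∃ P : Finpartition (univ : Finset V), 2 ≤ P.parts.card ∧
    r = ((hcut edge P).card : ℝ) / ((P.parts.card : ℝ) - 1) }

/-- The weighted strength `S_σ(H)`. -/
def strengthW [Fintype V] [DecidableEq V] [Fintype E] (σ : E → ℝ) (edge : E → Finset V) : ℝ :=
  sInf { r : ℝ | ∃ P : Finpartition (univ : Finset V), 2 ≤ P.parts.card ∧
    r = (∑ e ∈ hcut edge P, σ e) / ((P.parts.card : ℝ) - 1) }

/-- The fractional arboricity `D(H)`. -/
def arboricity [Fintype V] [DecidableEq V] [Fintype E] (edge : E → Finset V) : ℝ :=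
  sSup { r : ℝ | ∃ X : Finset V, 2 ≤ X.card ∧
    r = ((edgesIn edge X).card : ℝ) / ((X.card : ℝ) - 1) }

/-- Connectivity of the subhypergraph induced by the vertex set `W`
(only hyperedges contained in `W` are used). -/
def ConnectedIn (edge : E → Finset V) (W : Finset V) : Prop :=
  ∀ X ⊆ W, X.Nonempty → X ≠ W →
    ∃ e, edge e ⊆ W ∧ (edge e ∩ X).Nonempty ∧ ((edge e ∩ W) \ X).Nonempty

/-- Connectivity of the trace hypergraph on the vertex set `W`
(each hyperedge is replaced by its intersection with `W`, as in vertex deletion). -/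
def ConnectedOn (edge : E → Finset V) (W : Finset V) : Prop :=
  ∀ X ⊆ W, X.Nonempty → X ≠ W →
    ∃ e, ((edge e ∩ W) ∩ X).Nonempty ∧ ((edge e ∩ W) \ X).Nonempty

/-- A hypergraph is connected if every nonempty proper vertex subset is crossed by a hyperedge. -/
def HConnected [Fintype V] (edge : E → Finset V) : Prop :=
  ConnectedIn edge univ

/-- `H` is partition-connected if `|δ(P)| ≥ |P| - 1` for every partition `P` of `V`. -/
def PartitionConnected [Fintype V] [DecidableEq V] [Fintype E] (edge : E → Finset V) : Prop :=
  ∀ P : Finpartition (univ : Finset V), P.parts.card - 1 ≤ (hcut edge P).card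

/-- A partition is feasible if each part induces a connected subhypergraph. -/
def Feasible [Fintype V] [DecidableEq V] (edge : E → Finset V) (P : Finpartition (univ : Finset V)) : Prop :=
  ∀ p ∈ P.parts, ConnectedIn edge p

/-- The edges of the shrunk hypergraph `H_P`: vertices are the parts of `P`, and a hyperedge
becomes the set of parts it meets. -/
def shrunkEdge [Fintype V] [DecidableEq V] (edge : E → Finset V)
    (P : Finpartition (univ : Finset V)) (e : E) : Finset {p : Finset V // p ∈ P.parts} :=
  univ.filter fun p => (edge e ∩ p.1).Nonempty

/-- The shrunk hypergraph `H_P` is vertex-biconnected: it is connected and no single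
vertex deletion disconnects it. -/
def ShrunkBiconnected [Fintype V] [DecidableEq V] [Fintype E] (edge : E → Finset V)
    (P : Finpartition (univ : Finset V)) : Prop :=
  ConnectedIn (shrunkEdge edge P) univ ∧
  ∀ p : {p : Finset V // p ∈ P.parts}, ConnectedOn (shrunkEdge edge P) (univ \ {p})

/-- `F` is a hypertree: a hyperforest of size `|V| - 1`. -/
def IsHypertree [Fintype V] [DecidableEq V] (edge : E → Finset V) (F : Finset E) : Prop :=
  F.card = Fintype.card V - 1 ∧
  ∀ X : Finset V, X.Nonempty → (F.filter fun e => edge e ⊆ X).card ≤ X.card - 1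

/-- `m` is the multiplicity vector of a multiset of hyperedges forming a hypertree on `V`. -/
def IsMultiTree [Fintype V] [DecidableEq V] [Fintype E] (edge : E → Finset V) (m : E → ℕ) : Prop :=
  (∑ e, m e) = Fintype.card V - 1 ∧
  ∀ X : Finset V, X.Nonempty → (∑ e ∈ edgesIn edge X, m e) ≤ X.card - 1

/-- The multi-tree family `Ω(H)` as a set of usage vectors in `ℝ^E`. -/
def OmegaSet [Fintype V] [DecidableEq V] [Fintype E] (edge : E → Finset V) : Set (E → ℝ) :=
  { x | ∃ m : E → ℕ, IsMultiTree edge m ∧ x = fun e => (m e : ℝ) }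

/-- The hypertree family `Γ(H)` as a set of (indicator) usage vectors in `ℝ^E`. -/
def GammaSet [Fintype V] [DecidableEq V] [Fintype E] (edge : E → Finset V) : Set (E → ℝ) :=
  { x | ∃ F : Finset E, IsHypertree edge F ∧ x = fun e => if e ∈ F then (1 : ℝ) else 0 }

/-- The admissible set of a family of usage vectors. -/
def AdmSet [Fintype E] (G : Set (E → ℝ)) : Set (E → ℝ) :=
  { ρ | (∀ e, 0 ≤ ρ e) ∧ ∀ x ∈ G, 1 ≤ ∑ e, x e * ρ e }

/-- The weighted 1-modulus of a family of usage vectors. -/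
def Mod1 [Fintype E] (σ : E → ℝ) (G : Set (E → ℝ)) : ℝ :=
  sInf { t : ℝ | ∃ ρ ∈ AdmSet G, t = ∑ e, σ e * ρ e }

/-- `w` is an extreme point of `S`: it lies in `S` and is not the midpoint of two
distinct points of `S`. -/
def IsExtremePt [Fintype E] (S : Set (E → ℝ)) (w : E → ℝ) : Prop :=
  w ∈ S ∧ ∀ y ∈ S, ∀ z ∈ S, (∀ e, w e = (y e + z e) / 2) → y = z

/-- The rank function of the hypergraphic matroid `M(H)` (Frank et al.):
`r(F) = min { |V| - |P| + |δ_F(P)| }` over partitions `P` of `V`. -/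
def hrank [Fintype V] [DecidableEq V] [Fintype E] [DecidableEq E]
    (edge : E → Finset V) (F : Finset E) : ℕ :=
  sInf { n : ℕ | ∃ P : Finpartition (univ : Finset V),
    n = Fintype.card V - P.parts.card + (hcut edge P ∩ F).card }

/-- The (unweighted) strength of the hypergraphic matroid `M(H)`. -/
def mstrength [Fintype V] [DecidableEq V] [Fintype E] [DecidableEq E]
    (edge : E → Finset V) : ℝ :=
  sInf { r : ℝ | ∃ X : Finset E, hrank edge (univ \ X) < hrank edge univ ∧
    r = (X.card : ℝ) / ((hrank edge univ : ℝ) - (hrank edge (univ \ X) : ℝ)) }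

/-- The fractional arboricity of the hypergraphic matroid `M(H)`. -/
def marboricity [Fintype V] [DecidableEq V] [Fintype E] [DecidableEq E]
    (edge : E → Finset V) : ℝ :=
  sSup { r : ℝ | ∃ X : Finset E, 0 < hrank edge X ∧ r = (X.card : ℝ) / (hrank edge X : ℝ) }

end

/-- Connectivity of the subhypergraph `(W, {e ∈ C : e ⊆ W})`. -/
def ConnectedInSub {V E : Type*} (edge : E → Finset V) (C : Finset E) (W : Finset V) : Prop :=
  ∀ X ⊆ W, X.Nonempty → X ≠ W →
    ∃ e ∈ C, edge e ⊆ W ∧ (edge e ∩ X).Nonempty ∧ ((edge e ∩ W) \ X).Nonempty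

/-- The hyperedges of `C` meeting at least two parts of the partition `J` (of a vertex
subset): `δ_C(J)`. -/
def cutSub {V E : Type*} [DecidableEq V] (edge : E → Finset V) (C : Finset E)
    {s : Finset V} (J : Finpartition s) : Finset E :=
  C.filter fun e => ∃ p ∈ J.parts, ∃ q ∈ J.parts,
    p ≠ q ∧ (edge e ∩ p).Nonempty ∧ (edge e ∩ q).Nonempty


noncomputable section
/-- Extend a finpartition of `V₁ ⊆ univ` to a finpartition of `univ` by singletons. -/
def extParts {V : Type*} [Fintype V] [DecidableEq V] (V₁ : Finset V) (J : Finpartition V₁) :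
    Finpartition (univ : Finset V) where
  parts := J.parts ∪ (univ \ V₁).image ({·})
  supIndep := by
    rw [Finset.supIndep_iff_pairwiseDisjoint]
    intro p hp q hq hpq
    simp only [coe_union, coe_image, Set.mem_union, mem_coe, Set.mem_image] at hp hq
    have key : ∀ a, a ∈ J.parts → ∀ v ∈ univ \ V₁, Disjoint a {v} := by
      intro a ha v hv
      simp only [Finset.disjoint_singleton_right]
      intro hva
      exact (mem_sdiff.mp hv).2 (J.le ha hva)
    rcases hp with hp | ⟨v, hv, rfl⟩ <;> rcases hq with hq | ⟨w, hw, rfl⟩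
    · exact J.supIndep.pairwiseDisjoint hp hq hpq
    · exact key p hp w hw
    · exact (key q hq v hv).symm
    · simp only [Function.onFun, id]
      rw [Finset.disjoint_singleton_right, mem_singleton]
      intro h; exact hpq (by rw [h])
  sup_parts := by
    apply le_antisymm (le_top)
    intro v _
    rw [Finset.mem_sup]
    by_cases hv : v ∈ V₁
    · obtain ⟨t, ht, hvt⟩ := J.exists_mem hv
      exact ⟨t, mem_union_left _ ht, hvt⟩
    · exact ⟨{v}, mem_union_right _ (mem_image.mpr ⟨v, mem_sdiff.mpr ⟨mem_univ v, hv⟩, rfl⟩),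
        mem_singleton_self v⟩
  bot_notMem := by
    intro h
    rcases mem_union.mp h with h | h
    · exact J.bot_notMem h
    · obtain ⟨v, -, hv⟩ := mem_image.mp h
      exact (singleton_nonempty v).ne_empty (by simpa using hv)
end

/-- if `H₁ = (V₁, C₁)` is a connected subhypergraph with
`r(C₁) < |V₁| - 1`, and `J` is a feasible partition of `V₁` achieving
`r(C₁) = |V₁| - |J| + |δ_{H₁}(J)|`, then `|J| ≥ 2`, `δ_{H₁}(J)` is nonempty, and
`r(C₁) - r(C₁ ∖ δ_{H₁}(J)) ≥ |J| - |V₁| + r(C₁) = |δ_{H₁}(J)|`. -/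
theorem stmt19 {V E : Type*} [Fintype V] [DecidableEq V] [Fintype E] [DecidableEq E]
    (edge : E → Finset V) (V₁ : Finset V) (C₁ : Finset E)
    (hV₁ : V₁.Nonempty) (hsub : ∀ e ∈ C₁, edge e ⊆ V₁)
    (hconn : ConnectedInSub edge C₁ V₁)
    (hrk : hrank edge C₁ < V₁.card - 1)
    (J : Finpartition V₁)
    (hfeas : ∀ p ∈ J.parts, ConnectedInSub edge C₁ p)
    (hach : (hrank edge C₁ : ℤ) = (V₁.card : ℤ) - J.parts.card + (cutSub edge C₁ J).card) :
    2 ≤ J.parts.card ∧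
    (cutSub edge C₁ J).Nonempty ∧
    ((cutSub edge C₁ J).card : ℤ) = (J.parts.card : ℤ) - V₁.card + hrank edge C₁ ∧
    (J.parts.card : ℤ) - V₁.card + hrank edge C₁ ≤
      (hrank edge C₁ : ℤ) - hrank edge (C₁ \ cutSub edge C₁ J) := by
  
  have hJ2 : 2 ≤ J.parts.card := by
    by_contra h
    push_neg at h
    have hcut0 : cutSub edge C₁ J = ∅ := by
      rw [eq_empty_iff_forall_notMem]
      intro e he
      obtain ⟨-, p, hp, q, hq, hpq, -⟩ := mem_filter.mp he
      have : 1 < J.parts.card := one_lt_card.mpr ⟨p, hp, q, hq, hpq⟩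
      omega
    rw [hcut0] at hach
    simp at hach
    omega
  refine ⟨hJ2, ?_, by linarith, ?_⟩
  · obtain ⟨p, hp, q, hq, hpq⟩ := one_lt_card.mp hJ2
    have hpV : p ⊆ V₁ := J.le hp
    have hpne : p ≠ V₁ := by
      intro h
      have hd := J.supIndep.pairwiseDisjoint hq hp hpq.symm
      rw [h] at hd
      obtain ⟨x, hx⟩ := J.nonempty_of_mem_parts hq
      exact Finset.disjoint_left.mp hd hx (J.le hq hx)
    obtain ⟨e, heC, heV, hex, hey⟩ := hconn p hpV (J.nonempty_of_mem_parts hp) hpne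
    have instEq : (fun (a b : V) => Classical.propDecidable (a = b)) = ‹DecidableEq V› :=
      Subsingleton.elim _ _
    rw [show (ConnectedInSub edge C₁ V₁) = _ from rfl] at hconn
    replace hex : (edge e ∩ p).Nonempty := by convert hex
    replace hey : ((edge e ∩ V₁) \ p).Nonempty := by convert hey
    obtain ⟨x, hx0⟩ := hex
    have hx := Finset.mem_inter.mp hx0
    obtain ⟨v, hv0⟩ := hey
    have hv1 := Finset.mem_sdiff.mp hv0
    have hv : (v ∈ edge e ∧ v ∈ V₁) ∧ v ∉ p := ⟨Finset.mem_inter.mp hv1.1, hv1.2⟩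
    obtain ⟨t, ht, hvt⟩ := J.exists_mem hv.1.2
    refine ⟨e, mem_filter.mpr ⟨heC, p, hp, t, ht, ?_, ⟨x, mem_inter.mpr hx⟩,
      v, mem_inter.mpr ⟨hv.1.1, hvt⟩⟩⟩
    intro h; exact hv.2 (h ▸ hvt)
  · set P := extParts V₁ J with hP
    have hcard : P.parts.card = J.parts.card + (Fintype.card V - V₁.card) := by
      rw [hP]
      show (J.parts ∪ (univ \ V₁).image ({·})).card = _
      rw [card_union_of_disjoint, card_image_of_injective _ (fun a b h => by
        simpa using h)]
      · simp [card_sdiff_of_subset (subset_univ V₁)]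
      · rw [Finset.disjoint_left]
        intro a ha hb
        obtain ⟨v, hv, rfl⟩ := mem_image.mp hb
        exact (mem_sdiff.mp hv).2 (J.le ha (mem_singleton_self v))
    have hempty : hcut edge P ∩ (C₁ \ cutSub edge C₁ J) = ∅ := by
      rw [eq_empty_iff_forall_notMem]
      intro e he
      rw [mem_inter, mem_sdiff] at he
      obtain ⟨hecut, heC, hnc⟩ := he
      obtain ⟨-, p, hp, q, hq, hpq, hep, heq⟩ := mem_filter.mp hecut
      have hinJ : ∀ a ∈ P.parts, (edge e ∩ a).Nonempty → a ∈ J.parts := by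
        intro a ha hna
        rcases mem_union.mp ha with h | h
        · exact h
        · obtain ⟨v, hv, rfl⟩ := mem_image.mp h
          obtain ⟨w, hw⟩ := hna
          rw [mem_inter, mem_singleton] at hw
          exact ((mem_sdiff.mp hv).2 (hw.2 ▸ hsub e heC hw.1)).elim
      exact hnc (mem_filter.mpr ⟨heC, p, hinJ p hp hep, q, hinJ q hq heq, hpq, hep, heq⟩)
    have hle : hrank edge (C₁ \ cutSub edge C₁ J) ≤
        Fintype.card V - P.parts.card + (hcut edge P ∩ (C₁ \ cutSub edge C₁ J)).card :=
      Nat.sInf_le ⟨P, rfl⟩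
    rw [hempty] at hle
    simp only [card_empty, add_zero] at hle
    have h1 : J.parts.card ≤ V₁.card := J.card_parts_le_card
    have h2 : V₁.card ≤ Fintype.card V := (card_le_card (subset_univ V₁)).trans_eq card_univ
    omega
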